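/- Fix a slot i and a power budget p > 0. Suppose x* is an optimal solution of the PM-SLP problem in slot i (minimize ‖x‖² over {x ∈ ℂ^{N_t} : CI_i(x, 1)}) and let p* := ‖x*‖² with p* > 0. Then the pair (√(p/p*)·x*, √(p/p*)) is an optimal solution of the SB-SLP problem in slot i: it satisfies CI_i(√(p/p*)·x*, √(p/p*)) and ‖√(p/p*)·x*‖² ≤ p, and every pair (x, t) with CI_i(x, t) and ‖x‖² ≤ p satisfies t ≤ √(p/p*). -/
import Mathlib


open scoped BigOperators

/-- The constructive-interference (CI) constraint in a given symbol slot: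
`CI Nt Nr M h s γ σ x t` holds iff for every user `k`,
`Re((h_kᵀ x)/s_k) − |Im((h_kᵀ x)/s_k)| / tan(π/M) ≥ t·√(γ_k)·σ`. -/
noncomputable def CI (Nt Nr M : ℕ) (h : Fin Nr → Fin Nt → ℂ)
    (s : Fin Nr → ℂ) (γ : Fin Nr → ℝ) (σ : ℝ)
    (x : Fin Nt → ℂ) (t : ℝ) : Prop :=
  ∀ k : Fin Nr,
    ((∑ j, h k j * x j) / s k).re -
        |((∑ j, h k j * x j) / s k).im| / Real.tan (Real.pi / M) ≥
      t * Real.sqrt (γ k) * σ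

lemma CI_smul (Nt Nr M : ℕ) (h : Fin Nr → Fin Nt → ℂ)
    (s : Fin Nr → ℂ) (γ : Fin Nr → ℝ) (σ : ℝ)
    (x : Fin Nt → ℂ) (t c : ℝ) (hc : 0 ≤ c)
    (hCI : CI Nt Nr M h s γ σ x t) :
    CI Nt Nr M h s γ σ (c • x) (c * t) := by
  intro k
  have hk := hCI k
  have hsum : (∑ j, h k j * (c • x) j) = (c : ℂ) * ∑ j, h k j * x j := by
    rw [Finset.mul_sum]
    refine Finset.sum_congr rfl fun j _ => ?_
    simp [Pi.smul_apply, Complex.real_smul]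
    ring
  rw [hsum]
  have hdiv : ((c : ℂ) * (∑ j, h k j * x j)) / s k
      = (c : ℂ) * ((∑ j, h k j * x j) / s k) := by ring
  rw [hdiv]
  have hre : ((c : ℂ) * ((∑ j, h k j * x j) / s k)).re
      = c * ((∑ j, h k j * x j) / s k).re := by simp
  have him : ((c : ℂ) * ((∑ j, h k j * x j) / s k)).im
      = c * ((∑ j, h k j * x j) / s k).im := by simp
  rw [hre, him, abs_mul, abs_of_nonneg hc]
  have : c * ((∑ j, h k j * x j) / s k).re -
      c * |((∑ j, h k j * x j) / s k).im| / Real.tan (Real.pi / M)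
      = c * (((∑ j, h k j * x j) / s k).re -
        |((∑ j, h k j * x j) / s k).im| / Real.tan (Real.pi / M)) := by ring
  rw [this]
  calc c * t * Real.sqrt (γ k) * σ = c * (t * Real.sqrt (γ k) * σ) := by ring
    _ ≤ c * (((∑ j, h k j * x j) / s k).re -
        |((∑ j, h k j * x j) / s k).im| / Real.tan (Real.pi / M)) :=
      mul_le_mul_of_nonneg_left hk hc

/-- PM-SLP optimum `x*` with value `p* = ‖x*‖² > 0` yields the SB-SLP optimum
`(√(p/p*)·x*, √(p/p*))` for power budget `p > 0`. -/
theorem stmt3 (Nt Nr Ns M : ℕ) (hNt : 0 < Nt) (hNr : 0 < Nr) (hNs : 0 < Ns)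
    (hM : 3 ≤ M)
    (h : Fin Nr → Fin Nt → ℂ)
    (s : Fin Nr → Fin Ns → ℂ) (hs : ∀ k i, s k i ≠ 0)
    (γ : Fin Nr → Fin Ns → ℝ) (hγ : ∀ k i, 0 ≤ γ k i)
    (σ : ℝ) (hσ : 0 < σ)
    (i : Fin Ns) (p : ℝ) (hp : 0 < p)
    (xstar : Fin Nt → ℂ)
    (hfeas : CI Nt Nr M h (fun k => s k i) (fun k => γ k i) σ xstar 1)
    (hopt : ∀ y : Fin Nt → ℂ,
      CI Nt Nr M h (fun k => s k i) (fun k => γ k i) σ y 1 →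
      ∑ j, ‖xstar j‖ ^ 2 ≤ ∑ j, ‖y j‖ ^ 2)
    (pstar : ℝ) (hpstar : pstar = ∑ j, ‖xstar j‖ ^ 2) (hpstar0 : 0 < pstar) :
    CI Nt Nr M h (fun k => s k i) (fun k => γ k i) σ
        (Real.sqrt (p / pstar) • xstar) (Real.sqrt (p / pstar)) ∧
    (∑ j, ‖(Real.sqrt (p / pstar) • xstar) j‖ ^ 2 ≤ p) ∧
    (∀ (x : Fin Nt → ℂ) (t : ℝ),
      CI Nt Nr M h (fun k => s k i) (fun k => γ k i) σ x t →
      (∑ j, ‖x j‖ ^ 2 ≤ p) → t ≤ Real.sqrt (p / pstar)) := by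
  set c := Real.sqrt (p / pstar) with hc
  have hc0 : 0 ≤ c := Real.sqrt_nonneg _
  have hcpos : 0 < c := Real.sqrt_pos.mpr (div_pos hp hpstar0)
  refine ⟨?_, ?_, ?_⟩
  · have := CI_smul Nt Nr M h (fun k => s k i) (fun k => γ k i) σ xstar 1 c hc0 hfeas
    simpa using this
  · have hsum : ∑ j, ‖(c • xstar) j‖ ^ 2 = c ^ 2 * ∑ j, ‖xstar j‖ ^ 2 := by
      rw [Finset.mul_sum]
      refine Finset.sum_congr rfl fun j _ => ?_
      simp [norm_smul, mul_pow, abs_of_nonneg hc0]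
    rw [hsum, ← hpstar, hc, Real.sq_sqrt (le_of_lt (div_pos hp hpstar0)),
      div_mul_cancel₀ _ (ne_of_gt hpstar0)]
  · intro x t hCIx hx
    rcases le_or_gt t 0 with ht | ht
    · exact ht.trans hc0
    · have hCI1 := CI_smul Nt Nr M h (fun k => s k i) (fun k => γ k i) σ x t
        (1 / t) (by positivity) hCIx
      rw [one_div_mul_cancel (ne_of_gt ht)] at hCI1
      have hle := hopt _ hCI1
      have hsum : ∑ j, ‖((1 / t) • x) j‖ ^ 2 = (1 / t) ^ 2 * ∑ j, ‖x j‖ ^ 2 := by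
        rw [Finset.mul_sum]
        refine Finset.sum_congr rfl fun j _ => ?_
        simp [norm_smul, mul_pow, abs_of_nonneg (le_of_lt (one_div_pos.mpr ht))]
      rw [hsum] at hle
      have ht2 : t ^ 2 ≤ p / pstar := by
        rw [le_div_iff₀ hpstar0]
        have h1 : (1 / t) ^ 2 * t ^ 2 = 1 := by field_simp
        nlinarith [hle, hx, sq_nonneg (1 / t), sq_nonneg t]
      calc t = Real.sqrt (t ^ 2) := (Real.sqrt_sq ht.le).symm
        _ ≤ c := Real.sqrt_le_sqrt ht2
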